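/- Binary-environment Wald vs. causal Dantzig population identities: suppose X = e·η_x + H (with e ∈ {1,2} a deterministic environment label, η_x, H centered, independent, non-degenerate), and Y = βX + H + η_y with η_y centered independent of (η_x, H). Then E[X | e=1] = E[X | e=2] = 0 (so the instrumental-variable/Wald estimand (E[Y|e=1]−E[Y|e=2])/(E[X|e=1]−E[X|e=2]) is not well-defined), while the causal Dantzig population estimand (E[X^1 Y^1] − E[X^2 Y^2]) / (E[(X^1)^2] − E[(X^2)^2]) is well-defined and equals β. -/

import Mathlib

open MeasureTheory ProbabilityTheory

/-- Binary environment, variance intervention `X = e·η_x + H`, `Y = βX + H + η_y`: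
the environments produce no mean shift in `X` (so the Wald/IV estimand is degenerate),
while the causal Dantzig population estimand
`(E[X¹Y¹] − E[X²Y²])/(E[(X¹)²] − E[(X²)²])` is well-defined and equals `β`. -/
theorem wald_degenerate_causal_dantzig_consistent {Ω : Type*} [MeasurableSpace Ω]
    (μ : Measure Ω) [IsProbabilityMeasure μ]
    (ηx H ηy : Ω → ℝ) (β : ℝ)
    (hmx : Measurable ηx) (hmH : Measurable H) (hmy : Measurable ηy)
    (hL2x : MemLp ηx 2 μ) (hL2H : MemLp H 2 μ) (hL2y : MemLp ηy 2 μ)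
    (hcx : ∫ ω, ηx ω ∂μ = 0) (hcH : ∫ ω, H ω ∂μ = 0) (hcy : ∫ ω, ηy ω ∂μ = 0)
    (hnd : 0 < variance ηx μ)
    (hindep : iIndepFun ![ηx, H, ηy] μ)
    (X : ℝ → Ω → ℝ) (hX : ∀ e, X e = fun ω => e * ηx ω + H ω)
    (Y : ℝ → Ω → ℝ) (hY : ∀ e, Y e = fun ω => β * X e ω + H ω + ηy ω) :
    ((∫ ω, X 1 ω ∂μ) = 0 ∧ (∫ ω, X 2 ω ∂μ) = 0) ∧
      ((∫ ω, (X 1 ω) ^ 2 ∂μ) - ∫ ω, (X 2 ω) ^ 2 ∂μ) ≠ 0 ∧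
      ((∫ ω, X 1 ω * Y 1 ω ∂μ) - ∫ ω, X 2 ω * Y 2 ω ∂μ) /
          ((∫ ω, (X 1 ω) ^ 2 ∂μ) - ∫ ω, (X 2 ω) ^ 2 ∂μ) = β := by
  -- pairwise independence
  have h1 : IndepFun ηx H μ := by
    have := hindep.indepFun (show (0 : Fin 3) ≠ 1 by decide)
    simpa using this
  have h2 : IndepFun ηx ηy μ := by
    have := hindep.indepFun (show (0 : Fin 3) ≠ 2 by decide)
    simpa using this
  have h3 : IndepFun H ηy μ := by
    have := hindep.indepFun (show (1 : Fin 3) ≠ 2 by decide)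
    simpa using this
  -- integrability
  have Ix : Integrable ηx μ := hL2x.integrable one_le_two
  have IH : Integrable H μ := hL2H.integrable one_le_two
  have Iy : Integrable ηy μ := hL2y.integrable one_le_two
  have Ixx : Integrable (fun ω => (ηx ω) ^ 2) μ := hL2x.integrable_sq
  have IHH : Integrable (fun ω => (H ω) ^ 2) μ := hL2H.integrable_sq
  have IxH : Integrable (fun ω => ηx ω * H ω) μ := h1.integrable_mul Ix IH
  have Ixy : Integrable (fun ω => ηx ω * ηy ω) μ := h2.integrable_mul Ix Iy
  have IHy : Integrable (fun ω => H ω * ηy ω) μ := h3.integrable_mul IH Iy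
  -- zero cross moments
  have ExH : ∫ ω, ηx ω * H ω ∂μ = 0 := by
    rw [h1.integral_fun_mul_eq_mul_integral hL2x.aestronglyMeasurable hL2H.aestronglyMeasurable, hcx, zero_mul]
  have Exy : ∫ ω, ηx ω * ηy ω ∂μ = 0 := by
    rw [h2.integral_fun_mul_eq_mul_integral hL2x.aestronglyMeasurable hL2y.aestronglyMeasurable, hcx, zero_mul]
  have EHy : ∫ ω, H ω * ηy ω ∂μ = 0 := by
    rw [h3.integral_fun_mul_eq_mul_integral hL2H.aestronglyMeasurable hL2y.aestronglyMeasurable, hcH, zero_mul]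
  set A := ∫ ω, (ηx ω) ^ 2 ∂μ with hA
  set B := ∫ ω, (H ω) ^ 2 ∂μ with hB
  have hApos : 0 < A := by
    have hv := variance_eq_sub hL2x
    rw [hcx] at hv
    have hAv : variance ηx μ = A := by
      rw [hv, hA]; norm_num
    linarith
  -- means
  have hmean : ∀ e : ℝ, ∫ ω, X e ω ∂μ = 0 := by
    intro e
    simp only [hX]
    rw [integral_add (Ix.const_mul e) IH, integral_const_mul, hcx, hcH]
    ring
  -- second moments
  have hsq : ∀ e : ℝ, ∫ ω, (X e ω) ^ 2 ∂μ = e ^ 2 * A + B := by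
    intro e
    simp only [hX]
    have hpt : ∀ ω, (e * ηx ω + H ω) ^ 2
        = e ^ 2 * (ηx ω) ^ 2 + (2 * e) * (ηx ω * H ω) + (H ω) ^ 2 := by
      intro ω; ring
    simp_rw [hpt]
    have I1 : Integrable (fun ω => e ^ 2 * (ηx ω) ^ 2 + 2 * e * (ηx ω * H ω)) μ :=
      (Ixx.const_mul _).add (IxH.const_mul _)
    rw [integral_add I1 IHH, integral_add (Ixx.const_mul _) (IxH.const_mul _),
      integral_const_mul, integral_const_mul, ExH]
    ring
  -- cross moments X·Y
  have hxy : ∀ e : ℝ, ∫ ω, X e ω * Y e ω ∂μ = β * (e ^ 2 * A + B) + B := by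
    intro e
    simp only [hY, hX]
    have hpt : ∀ ω, (e * ηx ω + H ω) * (β * (e * ηx ω + H ω) + H ω + ηy ω)
        = (β * e ^ 2) * (ηx ω) ^ 2 + (2 * β * e + e) * (ηx ω * H ω)
          + e * (ηx ω * ηy ω) + (β + 1) * (H ω) ^ 2 + (H ω * ηy ω) := by
      intro ω; ring
    simp_rw [hpt]
    have I2 : Integrable (fun ω => β * e ^ 2 * (ηx ω) ^ 2 + (2 * β * e + e) * (ηx ω * H ω)) μ :=
      (Ixx.const_mul _).add (IxH.const_mul _)
    have I3 : Integrable (fun ω => β * e ^ 2 * (ηx ω) ^ 2 + (2 * β * e + e) * (ηx ω * H ω)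
        + e * (ηx ω * ηy ω)) μ := I2.add (Ixy.const_mul _)
    have I4 : Integrable (fun ω => β * e ^ 2 * (ηx ω) ^ 2 + (2 * β * e + e) * (ηx ω * H ω)
        + e * (ηx ω * ηy ω) + (β + 1) * (H ω) ^ 2) μ := I3.add (IHH.const_mul _)
    rw [integral_add I4 IHy, integral_add I3 (IHH.const_mul _),
      integral_add I2 (Ixy.const_mul _), integral_add (Ixx.const_mul _) (IxH.const_mul _),
      integral_const_mul, integral_const_mul, integral_const_mul, integral_const_mul,
      ExH, Exy, EHy]
    ring
  have hden : (∫ ω, (X 1 ω) ^ 2 ∂μ) - ∫ ω, (X 2 ω) ^ 2 ∂μ = -3 * A := by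
    rw [hsq 1, hsq 2]; ring
  have hnum : (∫ ω, X 1 ω * Y 1 ω ∂μ) - ∫ ω, X 2 ω * Y 2 ω ∂μ = β * (-3 * A) := by
    rw [hxy 1, hxy 2]; ring
  refine ⟨⟨hmean 1, hmean 2⟩, ?_, ?_⟩
  · rw [hden]; intro h; nlinarith
  · rw [hden, hnum, mul_div_assoc, div_self (by intro h; nlinarith), mul_one]
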